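/- Let (X, ≼) be a continuous lattice. Then for any x, y ∈ X with ¬(x ≼ y), there exist a Scott-open increasing set U containing x and a decreasing set V that is open for the lower topology and contains y, with U ∩ V = ∅. Consequently, the graph of ≼ is closed in X × X for the product of the Scott topology with the lower topology. -/

import Mathlib

/-- `u` is way-below `x`: every directed set whose supremum dominates `x`
contains an element above `u`. -/
def WayBelow {X : Type*} [CompleteLattice X] (u x : X) : Prop :=
  ∀ D : Set X, D.Nonempty → DirectedOn (· ≤ ·) D → x ≤ sSup D → ∃ d ∈ D, u ≤ d

namespace Stmt17Aux

variable {X : Type*} [CompleteLattice X]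

lemma wb_le {u x : X} (h : WayBelow u x) : u ≤ x := by
  obtain ⟨d, hd, hud⟩ := h {x} ⟨x, rfl⟩ (directedOn_singleton x)
    (by simp)
  rw [Set.mem_singleton_iff] at hd
  exact hd ▸ hud

lemma wb_mono_left {u' u x : X} (h : u' ≤ u) (hwb : WayBelow u x) : WayBelow u' x :=
  fun D h1 h2 h3 => by
    obtain ⟨d, hd, hud⟩ := hwb D h1 h2 h3
    exact ⟨d, hd, h.trans hud⟩

lemma wb_mono_right {u x x' : X} (h : x ≤ x') (hwb : WayBelow u x) : WayBelow u x' :=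
  fun D h1 h2 h3 => hwb D h1 h2 (h.trans h3)

lemma wb_bot (x : X) : WayBelow ⊥ x := fun D h1 _ _ => by
  obtain ⟨d, hd⟩ := h1; exact ⟨d, hd, bot_le⟩

lemma wb_sup {u v x : X} (hu : WayBelow u x) (hv : WayBelow v x) : WayBelow (u ⊔ v) x :=
  fun D h1 h2 h3 => by
    obtain ⟨d1, hd1, hud1⟩ := hu D h1 h2 h3
    obtain ⟨d2, hd2, hud2⟩ := hv D h1 h2 h3
    obtain ⟨d, hd, h1d, h2d⟩ := h2 d1 hd1 d2 hd2
    exact ⟨d, hd, sup_le (hud1.trans h1d) (hud2.trans h2d)⟩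

lemma wbset_nonempty (x : X) : {u | WayBelow u x}.Nonempty := ⟨⊥, wb_bot x⟩

lemma wbset_directed (x : X) : DirectedOn (· ≤ ·) {u | WayBelow u x} :=
  fun u hu v hv => ⟨u ⊔ v, wb_sup hu hv, le_sup_left, le_sup_right⟩

/-- In a continuous lattice, `⇑u = {z | u ≪ z}` is Scott-open. -/
lemma scott_open_wb (hcont : ∀ x : X, x = sSup {u | WayBelow u x}) (u : X) :
    @IsOpen X (Topology.scott X Set.univ) {z | WayBelow u z} := by
  letI := Topology.scott X Set.univ
  haveI : Topology.IsScott X Set.univ := ⟨rfl⟩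
  rw [Topology.IsScott.isOpen_iff_isUpperSet_and_dirSupInaccOn (D := Set.univ)]
  constructor
  · exact fun a b hab ha => wb_mono_right hab ha
  · intro d _ hdne hdir a hlub ha
    set E : Set X := {v | ∃ e ∈ d, WayBelow v e} with hE
    have hEne : E.Nonempty := by
      obtain ⟨e, he⟩ := hdne; exact ⟨⊥, e, he, wb_bot e⟩
    have hEdir : DirectedOn (· ≤ ·) E := by
      rintro v1 ⟨e1, he1, hv1⟩ v2 ⟨e2, he2, hv2⟩
      obtain ⟨e, he, h1e, h2e⟩ := hdir e1 he1 e2 he2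
      exact ⟨v1 ⊔ v2, ⟨e, he, wb_sup (wb_mono_right h1e hv1) (wb_mono_right h2e hv2)⟩,
        le_sup_left, le_sup_right⟩
    have haE : a ≤ sSup E := by
      rw [hlub.sSup_eq.symm]
      apply sSup_le
      intro e he
      calc e = sSup {v | WayBelow v e} := hcont e
        _ ≤ sSup E := sSup_le_sSup (fun v hv => ⟨e, he, hv⟩)
    obtain ⟨v, ⟨e, he, hve⟩, huv⟩ := ha E hEne hEdir haE
    exact ⟨e, he, wb_mono_left huv hve⟩

/-- Main separation lemma. -/
lemma sep (hcont : ∀ x : X, x = sSup {u | WayBelow u x}) {x y : X} (hxy : ¬ x ≤ y) :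
    ∃ U V : Set X,
      @IsOpen X (Topology.scott X Set.univ) U ∧ IsUpperSet U ∧ x ∈ U ∧
      @IsOpen X (Topology.lower X) V ∧ IsLowerSet V ∧ y ∈ V ∧
      U ∩ V = ∅ := by
  have : ∃ u, WayBelow u x ∧ ¬ u ≤ y := by
    by_contra h
    push_neg at h
    exact hxy ((hcont x).le.trans (sSup_le fun u hu => h u hu))
  obtain ⟨u, hux, huy⟩ := this
  refine ⟨{z | WayBelow u z}, (Set.Ici u)ᶜ, scott_open_wb hcont u,
    fun a b hab ha => wb_mono_right hab ha, hux,
    TopologicalSpace.GenerateOpen.basic _ ⟨u, rfl⟩,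
    (isUpperSet_Ici u).compl, huy, ?_⟩
  ext z
  simp only [Set.mem_inter_iff, Set.mem_compl_iff, Set.mem_Ici, Set.mem_setOf_eq,
    Set.mem_empty_iff_false, iff_false, not_and, not_not]
  exact fun hz => wb_le hz

end Stmt17Aux

/-- In a continuous lattice `(X, ≼)` (every element is the supremum of the
elements way-below it), whenever `¬ x ≼ y` there are a Scott-open increasing set `U ∋ x`
and a decreasing lower-topology-open set `V ∋ y` with `U ∩ V = ∅`; consequently the
graph of `≼` is closed in `X × X` for the product of the Scott and lower topologies. -/
theorem stmt17 {X : Type*} [CompleteLattice X]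
    (hcont : ∀ x : X, x = sSup {u | WayBelow u x}) :
    (∀ x y : X, ¬ x ≤ y →
      ∃ U V : Set X,
        @IsOpen X (Topology.scott X Set.univ) U ∧ IsUpperSet U ∧ x ∈ U ∧
        @IsOpen X (Topology.lower X) V ∧ IsLowerSet V ∧ y ∈ V ∧
        U ∩ V = ∅) ∧
    @IsClosed (X × X)
      (@instTopologicalSpaceProd X X (Topology.scott X Set.univ) (Topology.lower X))
      {p : X × X | p.1 ≤ p.2} := by
  refine ⟨fun x y hxy => Stmt17Aux.sep hcont hxy, ?_⟩
  letI t1 : TopologicalSpace X := Topology.scott X Set.univ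
  letI t2 : TopologicalSpace X := Topology.lower X
  letI : TopologicalSpace (X × X) := @instTopologicalSpaceProd X X t1 t2
  rw [← isOpen_compl_iff]
  rw [isOpen_iff_forall_mem_open]
  rintro ⟨x, y⟩ hxy
  simp only [Set.mem_compl_iff, Set.mem_setOf_eq] at hxy
  obtain ⟨U, V, hU, hUup, hxU, hV, hVlow, hyV, hUV⟩ := Stmt17Aux.sep hcont hxy
  refine ⟨U ×ˢ V, ?_, @IsOpen.prod X X t1 t2 _ _ hU hV, Set.mk_mem_prod hxU hyV⟩
  rintro ⟨a, b⟩ ⟨haU, hbV⟩ (hab : a ≤ b)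
  have : a ∈ U ∩ V := ⟨haU, hVlow hab hbV⟩
  rw [hUV] at this
  exact this
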